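/- Let 0 < α < 1 and define v : ℝ → ℝ by v(t) = ∑_{k=0}^∞ (−1)^k t^(k(1−α)+2) / Γ(k(1−α) + 3) for t ≥ 0 (so v(t) = t² E_{1−α,3}(−t^(1−α))). Then for every t > 0, v′(t) = −(1/Γ(1−α)) · d/dt [ ∫₀ᵗ (t−τ)^(−α) v(τ) dτ ] + t, i.e. v′(t) equals the negative of the Riemann–Liouville fractional derivative of order α of v at t, plus the source t. -/

import Mathlib

open Real MeasureTheory

/-- `v t = t² E_{1-α,3}(-t^(1-α)) = ∑ₖ (-1)^k t^(k(1-α)+2) / Γ(k(1-α) + 3)`. -/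
noncomputable def mlSin (α : ℝ) : ℝ → ℝ :=
  fun t => ∑' k : ℕ,
    (-1 : ℝ) ^ k * t ^ ((k : ℝ) * (1 - α) + 2) / Real.Gamma ((k : ℝ) * (1 - α) + 3)

/-- Summability of Mittag-Leffler type series. -/
lemma ml_summable {β : ℝ} (hβ : 0 < β) {r : ℝ} (hr : 0 ≤ r) {c : ℝ} (hc : 2 ≤ c) :
    Summable (fun k : ℕ => r ^ k / Real.Gamma ((k : ℝ) * β + c)) := by
  obtain ⟨m, hm0, hmβ⟩ : ∃ m : ℕ, 0 < m ∧ 1 ≤ (m : ℝ) * β := by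
    obtain ⟨m, hm⟩ := exists_nat_ge (1 / β)
    exact ⟨m + 1, Nat.succ_pos m, by
      rw [div_le_iff₀ hβ] at hm; push_cast; nlinarith⟩
  have key : ∀ j : ℕ, Summable (fun q : ℕ =>
      r ^ (q * m + j) / Real.Gamma (((q * m + j : ℕ) : ℝ) * β + c)) := by
    intro j
    apply summable_of_ratio_norm_eventually_le (r := 1/2) (by norm_num)
    filter_upwards [Filter.eventually_ge_atTop (⌈2 * r ^ m⌉₊)] with q hq
    set y : ℝ := ((q * m + j : ℕ) : ℝ) * β + c with hy
    have hc0 : (0:ℝ) ≤ ((q * m + j : ℕ) : ℝ) * β := by positivity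
    have hy2 : 2 ≤ y := by linarith
    have hΓy : 0 < Real.Gamma y := Real.Gamma_pos_of_pos (by linarith)
    have hidx : (((q + 1) * m + j : ℕ) : ℝ) * β + c = y + (m : ℝ) * β := by
      rw [hy]; push_cast; ring
    have hmono : Real.Gamma (y + 1) ≤ Real.Gamma (y + (m : ℝ) * β) :=
      Real.Gamma_strictMonoOn_Ici.monotoneOn (by simp only [Set.mem_Ici]; linarith)
        (by simp only [Set.mem_Ici]; linarith) (by linarith)
    have hrec : Real.Gamma (y + 1) = y * Real.Gamma y :=
      Real.Gamma_add_one (by positivity)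
    have hΓbig : y * Real.Gamma y ≤ Real.Gamma (y + (m : ℝ) * β) := hrec ▸ hmono
    have hΓbig' : 0 < Real.Gamma (y + (m : ℝ) * β) :=
      lt_of_lt_of_le (by positivity) hΓbig
    -- 2 * r^m ≤ y
    have h2r : 2 * r ^ m ≤ y := by
      have h1 : (2 * r ^ m : ℝ) ≤ (⌈2 * r ^ m⌉₊ : ℝ) := Nat.le_ceil _
      have h2 : ((⌈2 * r ^ m⌉₊ : ℕ) : ℝ) ≤ (q : ℝ) := Nat.cast_le.mpr hq
      have h3 : (q : ℝ) ≤ ((q * m + j : ℕ) : ℝ) * β := by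
        push_cast
        have : (q : ℝ) * 1 ≤ (q : ℝ) * ((m:ℝ) * β) :=
          mul_le_mul_of_nonneg_left hmβ (Nat.cast_nonneg q)
        nlinarith [Nat.cast_nonneg (α := ℝ) j]
      linarith
    have hpow : r ^ ((q + 1) * m + j) = r ^ (q * m + j) * r ^ m := by
      rw [← pow_add]; ring_nf
    rw [Real.norm_of_nonneg (by positivity), Real.norm_of_nonneg (by positivity), hidx, hpow]
    rw [div_le_iff₀ hΓbig']
    have hrm : r ^ (q * m + j) * r ^ m * Real.Gamma y * 2 ≤ r ^ (q * m + j) * Real.Gamma (y + (m:ℝ) * β) := by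
      calc r ^ (q * m + j) * r ^ m * Real.Gamma y * 2
          = r ^ (q * m + j) * (2 * r ^ m) * Real.Gamma y := by ring
        _ ≤ r ^ (q * m + j) * y * Real.Gamma y := by
            apply mul_le_mul_of_nonneg_right _ hΓy.le
            exact mul_le_mul_of_nonneg_left h2r (by positivity)
        _ = r ^ (q * m + j) * (y * Real.Gamma y) := by ring
        _ ≤ r ^ (q * m + j) * Real.Gamma (y + (m:ℝ) * β) :=
            mul_le_mul_of_nonneg_left hΓbig (by positivity)
    calc r ^ (q * m + j) * r ^ m
        ≤ 1/2 * (r ^ (q * m + j) * Real.Gamma (y + (m:ℝ)*β)) / Real.Gamma y := by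
          rw [le_div_iff₀ hΓy]; nlinarith
      _ = 1/2 * (r ^ (q * m + j) / Real.Gamma y) * Real.Gamma (y + (m:ℝ)*β) := by ring
  -- assemble via ℕ ≃ ℕ × Fin m
  haveI : NeZero m := ⟨hm0.ne'⟩
  rw [← (Nat.divModEquiv m).symm.summable_iff]
  have heq : ∀ p : ℕ × Fin m, ((Nat.divModEquiv m).symm p) = p.1 * m + (p.2 : ℕ) := fun p => rfl
  apply (summable_prod_of_nonneg ?_).mpr
  · constructor
    · intro q; exact Summable.of_finite
    · apply Summable.congr (f := fun q => ∑ j : Fin m,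
        r ^ (q * m + (j:ℕ)) / Real.Gamma (((q * m + (j:ℕ) : ℕ) : ℝ) * β + c))
      · exact summable_sum fun j _ => key j
      · intro q
        rw [tsum_fintype]
        rfl
  · intro p
    simp only [Function.comp_apply, heq]
    positivity

/-- Real Beta integral in convolution form. -/
lemma real_beta_integral {s b c : ℝ} (hs : 0 < s) (hb : 0 < b) (hc : 0 < c) :
    ∫ τ in (0:ℝ)..s, τ ^ (b - 1) * (s - τ) ^ (c - 1) =
      s ^ (b + c - 1) * (Real.Gamma b * Real.Gamma c / Real.Gamma (b + c)) := by
  have h1 := Complex.betaIntegral_scaled (b : ℂ) (c : ℂ) hs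
  have h2 := Complex.Gamma_mul_Gamma_eq_betaIntegral
    (s := (b:ℂ)) (t := (c:ℂ)) (by simpa using hb) (by simpa using hc)
  have hΓ : Complex.Gamma ((b:ℂ) + c) ≠ 0 :=
    Complex.Gamma_ne_zero_of_re_pos (by simp; positivity)
  have hbeta : Complex.betaIntegral b c =
      Complex.Gamma b * Complex.Gamma c / Complex.Gamma ((b:ℂ) + c) := by
    field_simp [h2]
    rw [h2]; ring
  -- LHS of h1 equals ofReal of the real integral
  have hcong : (∫ x in (0:ℝ)..s, (x : ℂ) ^ ((b:ℂ) - 1) * ((s : ℂ) - x) ^ ((c:ℂ) - 1)) =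
      ((∫ τ in (0:ℝ)..s, τ ^ (b - 1) * (s - τ) ^ (c - 1) : ℝ) : ℂ) := by
    rw [← intervalIntegral.integral_ofReal]
    apply intervalIntegral.integral_congr
    intro x hx
    rw [Set.uIcc_of_le hs.le] at hx
    obtain ⟨hx0, hxs⟩ := hx
    show (x:ℂ) ^ ((b:ℂ) - 1) * ((s:ℂ) - (x:ℂ)) ^ ((c:ℂ) - 1)
      = ((x ^ (b-1) * (s-x) ^ (c-1) : ℝ) : ℂ)
    rw [show ((b:ℂ) - 1) = ((b - 1 : ℝ) : ℂ) by push_cast; ring,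
      show ((c:ℂ) - 1) = ((c - 1 : ℝ) : ℂ) by push_cast; ring,
      show ((s:ℂ) - (x:ℂ)) = ((s - x : ℝ) : ℂ) by push_cast; ring,
      ← Complex.ofReal_cpow hx0, ← Complex.ofReal_cpow (by linarith : (0:ℝ) ≤ s - x)]
    push_cast
    ring
  rw [hcong, hbeta] at h1
  have hrhs : ((s:ℂ)) ^ ((b:ℂ) + c - 1) *
      (Complex.Gamma b * Complex.Gamma c / Complex.Gamma ((b:ℂ)+c)) =
      ((s ^ (b + c - 1) * (Real.Gamma b * Real.Gamma c / Real.Gamma (b + c)) : ℝ) : ℂ) := by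
    have : ((b:ℂ) + c - 1) = ((b + c - 1 : ℝ) : ℂ) := by push_cast; ring
    rw [this, ← Complex.ofReal_cpow hs.le]
    rw [show ((b:ℂ) + c) = ((b + c : ℝ) : ℂ) by push_cast; ring]
    rw [Complex.Gamma_ofReal, Complex.Gamma_ofReal, Complex.Gamma_ofReal]
    push_cast
    ring
  rw [hrhs] at h1
  exact_mod_cast h1

lemma rpow_integrable {α s c : ℝ} (hα0 : 0 < α) (hα1 : α < 1) (hs : 0 < s) (hc : 0 ≤ c) :
    IntervalIntegrable (fun τ => τ ^ c * (s - τ) ^ (-α)) volume 0 s := by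
  have h1 : IntervalIntegrable (fun x : ℝ => x ^ (-α)) volume 0 s :=
    intervalIntegral.intervalIntegrable_rpow' (by linarith)
  have h2 : IntervalIntegrable (fun τ : ℝ => (s - τ) ^ (-α)) volume 0 s := by
    have := h1.comp_sub_left s
    simpa using this.symm
  have h3 : ContinuousOn (fun τ : ℝ => τ ^ c) (Set.uIcc 0 s) := by
    rcases eq_or_lt_of_le hc with h | h
    · simp [← h]
      exact continuousOn_const
    · apply ContinuousOn.rpow_const continuousOn_id
      intro x _; right; linarith
  simpa [mul_comm] using h2.mul_continuousOn h3

lemma frac_integral_eq {α : ℝ} (hα0 : 0 < α) (hα1 : α < 1) {s : ℝ} (hs : 0 < s) :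
    (∫ τ in (0:ℝ)..s, (s - τ) ^ (-α) * mlSin α τ) =
      Real.Gamma (1 - α) * (s ^ 2 / 2 - mlSin α s) := by
  set β := 1 - α with hβdef
  have hβ : 0 < β := by simp [hβdef]; linarith
  have hβ1 : β < 1 := by simp [hβdef]; linarith
  have hΓpos : ∀ k : ℕ, 0 < Real.Gamma ((k:ℝ) * β + 3) := fun k =>
    Real.Gamma_pos_of_pos (by positivity)
  -- the summand
  set F : ℕ → ℝ → ℝ := fun k τ =>
    (s - τ) ^ (-α) * ((-1:ℝ) ^ k * τ ^ ((k:ℝ) * β + 2) / Real.Gamma ((k:ℝ) * β + 3)) with hF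
  -- each term is integrable on Ioc 0 s
  have hFint : ∀ k : ℕ, IntegrableOn (F k) (Set.Ioc 0 s) volume := by
    intro k
    have := (rpow_integrable hα0 hα1 hs (by positivity : (0:ℝ) ≤ (k:ℝ)*β+2)).const_mul
      ((-1:ℝ)^k / Real.Gamma ((k:ℝ)*β+3))
    rw [intervalIntegrable_iff_integrableOn_Ioc_of_le hs.le] at this
    apply this.congr_fun _ measurableSet_Ioc
    intro τ _
    rw [hF]; ring
  -- value of each integral
  have hval : ∀ k : ℕ, ∫ τ in Set.Ioc 0 s, F k τ =
      (-1:ℝ)^k * Real.Gamma β * s ^ (((k:ℝ)+1) * β + 2) / Real.Gamma (((k:ℝ)+1) * β + 3) := by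
    intro k
    have hb : (0:ℝ) < (k:ℝ)*β+3 := by positivity
    have := real_beta_integral (b := (k:ℝ)*β+3) (c := β) hs hb hβ
    rw [intervalIntegral.integral_of_le hs.le] at this
    have hexp : (k:ℝ)*β+3-1 = (k:ℝ)*β+2 := by ring
    have hexp2 : (k:ℝ)*β+3+β-1 = ((k:ℝ)+1)*β+2 := by ring
    have hexp3 : (k:ℝ)*β+3+β = ((k:ℝ)+1)*β+3 := by ring
    have hβα : β - 1 = -α := by rw [hβdef]; ring
    rw [hexp, hexp2, hexp3, hβα] at this
    calc ∫ τ in Set.Ioc 0 s, F k τ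
        = ∫ τ in Set.Ioc 0 s, ((-1:ℝ)^k / Real.Gamma ((k:ℝ)*β+3)) *
            (τ ^ ((k:ℝ)*β+2) * (s - τ) ^ (-α)) := by
          apply setIntegral_congr_fun measurableSet_Ioc
          intro τ _; rw [hF]; ring
      _ = ((-1:ℝ)^k / Real.Gamma ((k:ℝ)*β+3)) *
            ∫ τ in Set.Ioc 0 s, τ ^ ((k:ℝ)*β+2) * (s - τ) ^ (-α) := by
          rw [MeasureTheory.integral_const_mul]
      _ = (-1:ℝ)^k * Real.Gamma β * s ^ (((k:ℝ)+1) * β + 2) / Real.Gamma (((k:ℝ)+1) * β + 3) := by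
          rw [this]
          field_simp
  -- norm integrals
  have hnorm : ∀ k : ℕ, (∫ τ in Set.Ioc 0 s, ‖F k τ‖) =
      Real.Gamma β * s ^ (((k:ℝ)+1) * β + 2) / Real.Gamma (((k:ℝ)+1) * β + 3) := by
    intro k
    have hb : (0:ℝ) < (k:ℝ)*β+3 := by positivity
    have hbi := real_beta_integral (b := (k:ℝ)*β+3) (c := β) hs hb hβ
    rw [intervalIntegral.integral_of_le hs.le] at hbi
    have hexp : (k:ℝ)*β+3-1 = (k:ℝ)*β+2 := by ring
    have hexp2 : (k:ℝ)*β+3+β-1 = ((k:ℝ)+1)*β+2 := by ring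
    have hexp3 : (k:ℝ)*β+3+β = ((k:ℝ)+1)*β+3 := by ring
    have hβα : β - 1 = -α := by rw [hβdef]; ring
    rw [hexp, hexp2, hexp3, hβα] at hbi
    calc (∫ τ in Set.Ioc 0 s, ‖F k τ‖)
        = ∫ τ in Set.Ioc 0 s, (1 / Real.Gamma ((k:ℝ)*β+3)) *
            (τ ^ ((k:ℝ)*β+2) * (s - τ) ^ (-α)) := by
          apply setIntegral_congr_fun measurableSet_Ioc
          intro τ hτ
          rw [hF]
          simp only [Real.norm_eq_abs, abs_mul, abs_div, abs_pow, abs_neg, abs_one, one_pow,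
            abs_of_nonneg (Real.rpow_nonneg (sub_nonneg.2 hτ.2) (-α)),
            abs_of_nonneg (Real.rpow_nonneg hτ.1.le ((k:ℝ)*β+2)),
            abs_of_nonneg (hΓpos k).le]
          ring
      _ = (1 / Real.Gamma ((k:ℝ)*β+3)) *
            ∫ τ in Set.Ioc 0 s, τ ^ ((k:ℝ)*β+2) * (s - τ) ^ (-α) := by
          rw [MeasureTheory.integral_const_mul]
      _ = Real.Gamma β * s ^ (((k:ℝ)+1) * β + 2) / Real.Gamma (((k:ℝ)+1) * β + 3) := by
          rw [hbi]
          field_simp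
  -- summability of norm integrals
  have hsβ : (0:ℝ) ≤ s ^ β := Real.rpow_nonneg hs.le β
  have hpow_split : ∀ k : ℕ, s ^ (((k:ℝ)+1) * β + 2) = s ^ (β + 2) * (s ^ β) ^ k := by
    intro k
    rw [show ((k:ℝ)+1) * β + 2 = β + 2 + β * (k:ℝ) by ring, Real.rpow_add hs,
      Real.rpow_mul hs.le, Real.rpow_natCast]
  have hsum : Summable (fun k : ℕ => ∫ τ in Set.Ioc 0 s, ‖F k τ‖) := by
    apply Summable.congr _ (fun k => (hnorm k).symm)
    have hbase : Summable (fun k : ℕ => (s ^ β) ^ k / Real.Gamma ((k:ℝ) * β + (3 + β))) :=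
      ml_summable hβ hsβ (by linarith)
    apply Summable.congr (hbase.mul_left (Real.Gamma β * s ^ (β + 2)))
    intro k
    rw [hpow_split k, show ((k:ℝ)+1) * β + 3 = (k:ℝ) * β + (3 + β) by ring]
    ring
  -- swap integral and sum
  have hswap := MeasureTheory.integral_tsum_of_summable_integral_norm
    (μ := volume.restrict (Set.Ioc 0 s)) hFint hsum
  -- identify the integrand
  have hintegrand : ∀ τ : ℝ, (s - τ) ^ (-α) * mlSin α τ = ∑' k : ℕ, F k τ := by
    intro τ
    rw [mlSin]
    simp only [← hβdef]
    rw [← tsum_mul_left]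
  -- the series f for mlSin α s
  set f : ℕ → ℝ := fun j => (-1:ℝ) ^ j * s ^ ((j:ℝ) * β + 2) / Real.Gamma ((j:ℝ) * β + 3)
    with hfdef
  have hfs : mlSin α s = ∑' j, f j := by
    rw [mlSin]
  have hf_summable : Summable f := by
    apply Summable.of_norm
    have hbase : Summable (fun k : ℕ => (s ^ β) ^ k / Real.Gamma ((k:ℝ) * β + 3)) :=
      ml_summable hβ hsβ (by norm_num)
    apply Summable.congr (hbase.mul_left (s ^ (2:ℝ)))
    intro j
    have hnj : ‖f j‖ = s ^ ((j:ℝ) * β + 2) / Real.Gamma ((j:ℝ) * β + 3) := by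
      rw [hfdef]
      simp only [Real.norm_eq_abs, abs_div, abs_mul, abs_pow, abs_neg, abs_one, one_pow, one_mul,
        abs_of_nonneg (Real.rpow_nonneg hs.le _),
        abs_of_nonneg (Real.Gamma_pos_of_pos (show (0:ℝ) < (j:ℝ)*β+3 by positivity)).le]
    rw [hnj, show (j:ℝ) * β + 2 = 2 + β * (j:ℝ) by ring, Real.rpow_add hs,
      Real.rpow_mul hs.le, Real.rpow_natCast, mul_div_assoc]
  have hΓ3 : Real.Gamma 3 = 2 := by
    rw [show (3:ℝ) = ((2:ℕ):ℝ) + 1 by norm_num, Real.Gamma_nat_eq_factorial]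
    norm_num
  have hf0 : f 0 = s ^ 2 / 2 := by
    rw [hfdef]
    simp only [Nat.cast_zero, zero_mul, zero_add, pow_zero, one_mul]
    rw [hΓ3, show s ^ (2:ℝ) = s ^ (2:ℕ) by rw [← Real.rpow_natCast s 2]; norm_num]
  have hshift : ∀ k : ℕ, f (k + 1) =
      -((-1:ℝ)^k * s ^ (((k:ℝ)+1) * β + 2) / Real.Gamma (((k:ℝ)+1) * β + 3)) := by
    intro k
    rw [hfdef]
    push_cast
    ring_nf
  -- put everything together
  rw [intervalIntegral.integral_of_le hs.le]
  calc (∫ τ in Set.Ioc 0 s, (s - τ) ^ (-α) * mlSin α τ)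
      = ∫ τ in Set.Ioc 0 s, ∑' k, F k τ := by
        apply setIntegral_congr_fun measurableSet_Ioc
        intro τ _
        exact hintegrand τ
    _ = ∑' k, ∫ τ in Set.Ioc 0 s, F k τ := hswap.symm
    _ = ∑' k, (-Real.Gamma β) * f (k + 1) := by
        apply tsum_congr
        intro k
        rw [hval k, hshift k]
        ring
    _ = (-Real.Gamma β) * ((∑' j, f j) - f 0) := by
        rw [tsum_mul_left, Summable.tsum_eq_zero_add hf_summable]
        ring
    _ = Real.Gamma β * (s ^ 2 / 2 - mlSin α s) := by
        rw [hfs, hf0]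
        ring

lemma mlSin_differentiableAt {α : ℝ} (hα0 : 0 < α) (hα1 : α < 1) {t : ℝ} (ht : 0 < t) :
    DifferentiableAt ℝ (mlSin α) t := by
  set β := 1 - α with hβdef
  have hβ : 0 < β := by rw [hβdef]; linarith
  have hΓpos : ∀ k : ℕ, 0 < Real.Gamma ((k:ℝ) * β + 3) := fun k =>
    Real.Gamma_pos_of_pos (by positivity)
  set R : ℝ := t ^ β + 1 with hR
  have hR0 : 0 < R := by positivity
  -- the complex Mittag-Leffler-type function
  set E : ℂ → ℂ := fun w => ∑' k : ℕ, w ^ k / (Real.Gamma ((k:ℝ) * β + 3) : ℂ) with hE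
  have hEdiff : DifferentiableOn ℂ E (Metric.ball 0 R) := by
    apply Complex.differentiableOn_tsum_of_summable_norm
      (u := fun k : ℕ => R ^ k / Real.Gamma ((k:ℝ) * β + 3))
      (ml_summable hβ hR0.le (by norm_num))
      (fun k => (differentiable_pow k).differentiableOn.div_const _)
      Metric.isOpen_ball
    intro k w hw
    rw [Metric.mem_ball, dist_zero_right] at hw
    rw [norm_div, norm_pow, Complex.norm_real, Real.norm_eq_abs,
      abs_of_nonneg (hΓpos k).le]
    gcongr
  -- mlSin in terms of E
  have hsummC : ∀ x : ℝ, Summable (fun k : ℕ => (x:ℂ) ^ k / (Real.Gamma ((k:ℝ) * β + 3) : ℂ)) := by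
    intro x
    apply Summable.of_norm
    apply Summable.congr (ml_summable hβ (abs_nonneg x) (show (2:ℝ) ≤ 3 by norm_num))
    intro k
    rw [norm_div, norm_pow, Complex.norm_real, Complex.norm_real, Real.norm_eq_abs,
      Real.norm_eq_abs, abs_of_nonneg (hΓpos k).le]
  have hg : ∀ x : ℝ, (E (x:ℂ)).re = ∑' k : ℕ, x ^ k / Real.Gamma ((k:ℝ) * β + 3) := by
    intro x
    rw [hE]
    have := Complex.reCLM.map_tsum (hsummC x)
    simp only [Complex.reCLM_apply] at this
    rw [this]
    apply tsum_congr
    intro k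
    rw [show ((x:ℂ) ^ k / (Real.Gamma ((k:ℝ) * β + 3) : ℂ)) =
      (((x ^ k / Real.Gamma ((k:ℝ) * β + 3) : ℝ)) : ℂ) by push_cast; ring]
    exact Complex.ofReal_re _
  -- differentiability of x ↦ (E x).re at -(t^β)
  have hx₀ : ((-(t ^ β) : ℝ) : ℂ) ∈ Metric.ball (0:ℂ) R := by
    rw [Metric.mem_ball, dist_zero_right, Complex.norm_real, Real.norm_eq_abs, abs_neg,
      abs_of_nonneg (Real.rpow_nonneg ht.le β), hR]
    linarith
  have hEat : DifferentiableAt ℂ E ((-(t ^ β) : ℝ) : ℂ) :=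
    hEdiff.differentiableAt (Metric.isOpen_ball.mem_nhds hx₀)
  have hgdiff : DifferentiableAt ℝ (fun x : ℝ => (E (x:ℂ)).re) (-(t ^ β)) :=
    (hEat.hasDerivAt.real_of_complex).differentiableAt
  -- the composite function
  have hcomp : DifferentiableAt ℝ (fun y : ℝ => y ^ 2 * (E ((-(y ^ β) : ℝ) : ℂ)).re) t := by
    apply DifferentiableAt.mul
    · exact (differentiable_pow 2).differentiableAt
    · exact DifferentiableAt.comp (g := fun x : ℝ => (E (x:ℂ)).re) (f := fun y : ℝ => -(y ^ β)) t hgdiff ((Real.differentiableAt_rpow_const_of_ne β ht.ne').neg)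
  -- mlSin agrees with the composite near t
  have heq : mlSin α =ᶠ[nhds t] fun y : ℝ => y ^ 2 * (E ((-(y ^ β) : ℝ) : ℂ)).re := by
    filter_upwards [isOpen_Ioi.mem_nhds (Set.mem_Ioi.mpr ht)] with y hy
    rw [Set.mem_Ioi] at hy
    rw [hg, mlSin, ← tsum_mul_left]
    apply tsum_congr
    intro k
    rw [← hβdef]
    rw [show (-(y ^ β)) ^ k = (-1:ℝ)^k * (y ^ β) ^ k by rw [neg_pow],
      show (y ^ β) ^ k = y ^ ((k:ℝ) * β) by
        rw [mul_comm, Real.rpow_mul hy.le, Real.rpow_natCast],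
      show y ^ ((k:ℝ) * β + 2) = y ^ ((k:ℝ) * β) * y ^ 2 by
        rw [Real.rpow_add hy, show (2:ℝ) = ((2:ℕ):ℝ) by norm_num, Real.rpow_natCast]]
    ring
  exact hcomp.congr_of_eventuallyEq heq

theorem mlSin_solves_fractional_ode (α : ℝ) (hα0 : 0 < α) (hα1 : α < 1)
    (t : ℝ) (ht : 0 < t) :
    deriv (mlSin α) t =
      -((1 / Real.Gamma (1 - α)) *
        deriv (fun s => ∫ τ in (0:ℝ)..s, (s - τ) ^ (-α) * mlSin α τ) t) + t := by
  have hβ : (0:ℝ) < 1 - α := by linarith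
  have hΓ : 0 < Real.Gamma (1 - α) := Real.Gamma_pos_of_pos hβ
  have hA := mlSin_differentiableAt hα0 hα1 ht
  have hB : (fun s => ∫ τ in (0:ℝ)..s, (s - τ) ^ (-α) * mlSin α τ) =ᶠ[nhds t]
      (fun s => Real.Gamma (1 - α) * (s ^ 2 / 2 - mlSin α s)) := by
    filter_upwards [isOpen_Ioi.mem_nhds (Set.mem_Ioi.mpr ht)] with s hs
    exact frac_integral_eq hα0 hα1 hs
  rw [hB.deriv_eq]
  have hsq : HasDerivAt (fun s : ℝ => s ^ 2 / 2) t t := by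
    simpa using (hasDerivAt_pow 2 t).div_const 2
  have h2 : HasDerivAt (fun s => Real.Gamma (1 - α) * (s ^ 2 / 2 - mlSin α s))
      (Real.Gamma (1 - α) * (t - deriv (mlSin α) t)) t :=
    (hsq.sub hA.hasDerivAt).const_mul _
  rw [h2.deriv]
  field_simp
  ring
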